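/- The bistatistic (veh', SIVEH) is Euler–Mahonian on S_n: it has the same joint distribution as (des, MAJ), i.e., Σ_{π∈S_n} s^{veh'(π)} q^{SIVEH(π)} = Σ_{π∈S_n} s^{des(π)} q^{MAJ(π)}. Equivalently, there is a bijection Θ : S_n → S_n with EV(Θ(π)) = Des(π) for all π. -/

import Mathlib

namespace FS

/-- The word `a_0, a_1, ..., a_n, a_{n+1}` of the permutation (as a list `l` of length `n`),
with the boundary convention `a_0 = a_{n+1} = n+1`. -/
def wordext (n : ℕ) (l : List ℕ) : ℕ → ℕ := fun i => ((n + 1) :: (l ++ [n + 1])).getD i 0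

/-- Number of descents of the word `l`. -/
def desL (l : List ℕ) : ℕ := (l.zip l.tail).countP (fun p => decide (p.2 < p.1))

/-- Number of peaks (boundary convention `a_0 = a_{n+1} = n+1`). -/
def peakL (n : ℕ) (l : List ℕ) : ℕ :=
  ((Finset.Icc 1 n).filter (fun k =>
    wordext n l (k - 1) < wordext n l k ∧ wordext n l (k + 1) < wordext n l k)).card

def valleyL (n : ℕ) (l : List ℕ) : ℕ :=
  ((Finset.Icc 1 n).filter (fun k =>
    wordext n l k < wordext n l (k - 1) ∧ wordext n l k < wordext n l (k + 1))).card

/-- Number of double ascents. -/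
def daL (n : ℕ) (l : List ℕ) : ℕ :=
  ((Finset.Icc 1 n).filter (fun k =>
    wordext n l (k - 1) < wordext n l k ∧ wordext n l k < wordext n l (k + 1))).card

/-- Number of double descents. -/
def ddL (n : ℕ) (l : List ℕ) : ℕ :=
  ((Finset.Icc 1 n).filter (fun k =>
    wordext n l k < wordext n l (k - 1) ∧ wordext n l (k + 1) < wordext n l k)).card

/-- All permutations of `[n] = {1, ..., n}` as lists. -/
def perms (n : ℕ) : List (List ℕ) := (List.range' 1 n).permutations


/-- In the increasing unordered tree of `l` (0-indexed positions), the parent of the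
vertex at position `i` is the leftmost position `j > i` with `l[j] < l[i]`
(`none` means the parent is the root `0`). -/
def parentIdx (l : List ℕ) (i : ℕ) : Option ℕ :=
  ((List.range l.length).filter (fun j => decide (i < j) && decide (l.getD j 0 < l.getD i 0))).head?

/-- The height of the vertex at position `i` in the increasing unordered tree of `l`
(children of the root have height 1). -/
def heightIdx (l : List ℕ) (i : ℕ) : ℕ :=
  match h : parentIdx l i with
  | none => 1
  | some j => if hj : i < j ∧ j ≤ l.length then heightIdx l j + 1 else 0
termination_by l.length + 1 - i
decreasing_by omega

/-- `EV(l)`: the set of (1-indexed) positions whose vertex has even height in the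
increasing unordered tree of `l`. -/
def EVset (l : List ℕ) : Finset ℕ :=
  (Finset.Icc 1 l.length).filter (fun i => Even (heightIdx l (i - 1)))

/-- The descent set (1-indexed). -/
def DesSet (l : List ℕ) : Finset ℕ :=
  (Finset.Icc 1 (l.length - 1)).filter (fun i => l.getD i 0 < l.getD (i - 1) 0)


-- filter/head? helpers
lemma hfr_some {p : ℕ → Bool} : ∀ (n s j : ℕ), s ≤ j → j < s + n → p j →
    (∀ i, s ≤ i → i < j → ¬ p i) → ((List.range' s n).filter p).head? = some j := by
  intro n
  induction n with
  | zero => intro s j h1 h2; omega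
  | succ n ih =>
    intro s j h1 h2 hp hmin
    rw [List.range'_succ]
    by_cases hs : p s
    · have : j = s := by
        by_contra hne
        exact hmin s le_rfl (by omega) hs
      simp [List.filter_cons, hs, this]
    · simp only [List.filter_cons, hs]
      have hne : s ≠ j := fun e => hs (e ▸ hp)
      exact ih (s+1) j (by omega) (by omega) hp (fun i hi1 hi2 => hmin i (by omega) hi2)

lemma hfr_some_inv {p : ℕ → Bool} : ∀ (n s j : ℕ),
    ((List.range' s n).filter p).head? = some j →
    s ≤ j ∧ j < s + n ∧ p j ∧ ∀ i, s ≤ i → i < j → ¬ p i := by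
  intro n
  induction n with
  | zero => intro s j h; simp at h
  | succ n ih =>
    intro s j h
    rw [List.range'_succ] at h
    by_cases hs : p s
    · simp [List.filter_cons, hs] at h
      subst h
      exact ⟨le_rfl, by omega, hs, fun i h1 h2 => by omega⟩
    · simp only [List.filter_cons, hs] at h
      obtain ⟨h1, h2, h3, h4⟩ := ih (s+1) j h
      refine ⟨by omega, by omega, h3, fun i hi1 hi2 => ?_⟩
      rcases Nat.eq_or_lt_of_le hi1 with rfl|hlt
      · exact hs
      · exact h4 i hlt hi2

lemma hfr_none {p : ℕ → Bool} {n s : ℕ} (h : ∀ j, s ≤ j → j < s + n → ¬ p j) :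
    ((List.range' s n).filter p).head? = none := by
  rw [List.head?_eq_none_iff, List.filter_eq_nil_iff]
  intro a ha
  rw [List.mem_range'_1] at ha
  exact h a ha.1 ha.2

lemma parentIdx_eq_some {l : List ℕ} {i j : ℕ} (h1 : i < j) (h2 : j < l.length)
    (h3 : l.getD j 0 < l.getD i 0)
    (hmin : ∀ j', i < j' → j' < j → ¬ l.getD j' 0 < l.getD i 0) :
    parentIdx l i = some j := by
  rw [parentIdx, List.range_eq_range']
  apply hfr_some _ _ _ (Nat.zero_le _) (by omega)
  · simp only [Bool.and_eq_true, decide_eq_true_eq]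
    exact ⟨h1, h3⟩
  · intro j' _ hj'
    simp only [Bool.and_eq_true, decide_eq_true_eq, not_and]
    intro hij'
    exact fun hc => hmin j' hij' hj' hc


lemma parentIdx_eq_some_inv {l : List ℕ} {i j : ℕ} (h : parentIdx l i = some j) :
    i < j ∧ j < l.length ∧ l.getD j 0 < l.getD i 0 ∧
      ∀ j', i < j' → j' < j → ¬ l.getD j' 0 < l.getD i 0 := by
  rw [parentIdx, List.range_eq_range'] at h
  obtain ⟨_, h2, h3, h4⟩ := hfr_some_inv _ _ _ h
  simp only [Bool.and_eq_true, decide_eq_true_eq] at h3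
  refine ⟨h3.1, by omega, h3.2, fun j' hj1 hj2 hc => ?_⟩
  exact h4 j' (Nat.zero_le _) hj2 (by simp only [Bool.and_eq_true, decide_eq_true_eq]; exact ⟨hj1, hc⟩)

lemma parentIdx_eq_none {l : List ℕ} {i : ℕ}
    (h : ∀ j, i < j → j < l.length → ¬ l.getD j 0 < l.getD i 0) :
    parentIdx l i = none := by
  rw [parentIdx, List.range_eq_range']
  apply hfr_none
  intro j _ hj
  simp only [Bool.and_eq_true, decide_eq_true_eq, not_and]
  exact fun hij hc => h j hij (by omega) hc

lemma parentIdx_eq_none_inv {l : List ℕ} {i : ℕ} (h : parentIdx l i = none) :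
    ∀ j, i < j → j < l.length → ¬ l.getD j 0 < l.getD i 0 := by
  intro j hij hjl hc
  rw [parentIdx, List.range_eq_range', List.head?_eq_none_iff, List.filter_eq_nil_iff] at h
  exact h j (by rw [List.mem_range'_1]; omega) (by simp only [Bool.and_eq_true, decide_eq_true_eq]; exact ⟨hij, hc⟩)

lemma heightIdx_of_none {l : List ℕ} {i : ℕ} (h : parentIdx l i = none) :
    heightIdx l i = 1 := by
  rw [heightIdx, h]

lemma heightIdx_of_some {l : List ℕ} {i j : ℕ} (h : parentIdx l i = some j) :
    heightIdx l i = heightIdx l j + 1 := by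
  obtain ⟨h1, h2, _, _⟩ := parentIdx_eq_some_inv h
  rw [heightIdx, h]
  simp [h1, h2.le]

/-! ### Part 2 : insertion -/

def fIns (k i : ℕ) : ℕ := if i < k then i else i + 1

lemma fIns_lt_iff {k a b : ℕ} : fIns k a < fIns k b ↔ a < b := by
  simp only [fIns]; split <;> split <;> omega

section
variable {l : List ℕ} {m k : ℕ}

lemma getD_insertIdx_f (hk : k ≤ l.length) {i : ℕ} (hi : i < l.length) :
    (l.insertIdx k m).getD (fIns k i) 0 = l.getD i 0 := by
  have hlen : (l.insertIdx k m).length = l.length + 1 := List.length_insertIdx_of_le_length hk _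
  by_cases h : i < k
  · rw [fIns, if_pos h, List.getD_eq_getElem _ _ (by omega), List.getD_eq_getElem _ _ hi]
    exact List.getElem_insertIdx_of_lt h (by omega)
  · obtain ⟨j, rfl⟩ : ∃ j, i = k + j := ⟨i - k, by omega⟩
    rw [fIns, if_neg h, List.getD_eq_getElem _ _ (by omega), List.getD_eq_getElem _ _ hi]
    exact (List.getElem_insertIdx_of_gt (by omega) (by omega)).trans (by simp)

lemma getD_insertIdx_k (hk : k ≤ l.length) : (l.insertIdx k m).getD k 0 = m := by
  have hlen : (l.insertIdx k m).length = l.length + 1 := List.length_insertIdx_of_le_length hk _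
  rw [List.getD_eq_getElem _ _ (by omega)]
  exact List.getElem_insertIdx_self (by omega)

lemma getD_insertIdx_lt (hk : k ≤ l.length) {x : ℕ} (hx : x < k) :
    (l.insertIdx k m).getD x 0 = l.getD x 0 := by
  have hf : fIns k x = x := by simp [fIns, hx]
  rw [← hf, getD_insertIdx_f hk (by omega), hf]

lemma getD_insertIdx_gt (hk : k ≤ l.length) {x : ℕ} (hgt : k < x) (hx : x ≤ l.length) :
    (l.insertIdx k m).getD x 0 = l.getD (x - 1) 0 := by
  have hf : fIns k (x - 1) = x := by simp only [fIns]; rw [if_neg (by omega)]; omega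
  rw [← hf, getD_insertIdx_f hk (by omega), hf]

lemma getD_mem_lt (hm : ∀ x ∈ l, x < m) {x : ℕ} (hx : x < l.length) : l.getD x 0 < m :=
  hm _ (by rw [List.getD_eq_getElem _ _ hx]; exact List.getElem_mem _)

lemma parentIdx_insertIdx (hk : k ≤ l.length) (hm : ∀ x ∈ l, x < m) {i : ℕ} (hi : i < l.length) :
    parentIdx (l.insertIdx k m) (fIns k i) = (parentIdx l i).map (fIns k) := by
  have hlen : (l.insertIdx k m).length = l.length + 1 := List.length_insertIdx_of_le_length hk _
  have hval : l.getD i 0 < m := hm _ (by rw [List.getD_eq_getElem _ _ hi]; exact List.getElem_mem _)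
  cases h : parentIdx l i with
  | none =>
    simp only [Option.map_none]
    apply parentIdx_eq_none
    intro j' hij' hj'
    rw [hlen] at hj'
    by_cases hjk : j' = k
    · subst hjk
      rw [getD_insertIdx_k hk, getD_insertIdx_f hk hi]
      omega
    · have : ∃ j, j < l.length ∧ fIns k j = j' := by
        by_cases hlt : j' < k
        · exact ⟨j', by omega, by simp [fIns, hlt]⟩
        · exact ⟨j' - 1, by omega, by simp only [fIns]; split <;> omega⟩
      obtain ⟨j, hj, rfl⟩ := this
      rw [getD_insertIdx_f hk hj, getD_insertIdx_f hk hi]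
      exact parentIdx_eq_none_inv h j (fIns_lt_iff.mp hij') hj
  | some j =>
    obtain ⟨h1, h2, h3, h4⟩ := parentIdx_eq_some_inv h
    simp only [Option.map_some]
    apply parentIdx_eq_some (fIns_lt_iff.mpr h1)
    · rw [hlen]
      simp only [fIns]; split <;> omega
    · rw [getD_insertIdx_f hk h2, getD_insertIdx_f hk hi]; exact h3
    · intro j'' hij'' hj''
      by_cases hjk : j'' = k
      · subst hjk
        rw [getD_insertIdx_k hk, getD_insertIdx_f hk hi]
        omega
      · have : ∃ j₁, j₁ < l.length ∧ fIns k j₁ = j'' := by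
          by_cases hlt : j'' < k
          · refine ⟨j'', by omega, by simp [fIns, hlt]⟩
          · refine ⟨j'' - 1, ?_, by simp only [fIns]; split <;> omega⟩
            have : j'' < fIns k j := hj''
            simp only [fIns] at this; split at this <;> omega
        obtain ⟨j₁, hj₁, rfl⟩ := this
        rw [getD_insertIdx_f hk hj₁, getD_insertIdx_f hk hi]
        exact h4 j₁ (fIns_lt_iff.mp hij'') (fIns_lt_iff.mp hj'')

lemma heightIdx_insertIdx_f (hk : k ≤ l.length) (hm : ∀ x ∈ l, x < m) :
    ∀ d i, i < l.length → l.length - i ≤ d →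
      heightIdx (l.insertIdx k m) (fIns k i) = heightIdx l i := by
  intro d
  induction d with
  | zero => intro i h1 h2; omega
  | succ d ih =>
    intro i hi hd
    cases h : parentIdx l i with
    | none =>
      have := parentIdx_insertIdx hk hm hi
      rw [h] at this
      rw [heightIdx_of_none this, heightIdx_of_none h]
    | some j =>
      obtain ⟨h1, h2, _, _⟩ := parentIdx_eq_some_inv h
      have hp := parentIdx_insertIdx hk hm hi
      rw [h] at hp
      rw [heightIdx_of_some hp, heightIdx_of_some h, ih j h2 (by omega)]

lemma heightIdx_insertIdx_k_lt (hk : k < l.length) (hm : ∀ x ∈ l, x < m) :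
    heightIdx (l.insertIdx k m) k = heightIdx l k + 1 := by
  have hlen : (l.insertIdx k m).length = l.length + 1 := List.length_insertIdx_of_le_length hk.le _
  have hp : parentIdx (l.insertIdx k m) k = some (k + 1) := by
    apply parentIdx_eq_some (by omega) (by omega)
    · have : fIns k k = k + 1 := by simp [fIns]
      rw [← this, getD_insertIdx_f hk.le hk, getD_insertIdx_k hk.le]
      exact hm _ (by rw [List.getD_eq_getElem _ _ hk]; exact List.getElem_mem _)
    · intro j' h1 h2; omega
  rw [heightIdx_of_some hp]
  have : fIns k k = k + 1 := by simp [fIns]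
  rw [← this, heightIdx_insertIdx_f hk.le hm l.length k hk (by omega)]

lemma heightIdx_insertIdx_k_eq (hm : ∀ x ∈ l, x < m) :
    heightIdx (l.insertIdx l.length m) l.length = 1 := by
  have hlen : (l.insertIdx l.length m).length = l.length + 1 :=
    List.length_insertIdx_of_le_length le_rfl _
  exact heightIdx_of_none (parentIdx_eq_none (fun j h1 h2 => by omega))

end

def evIns (S : Finset ℕ) (p n : ℕ) : Finset ℕ :=
  (Finset.Icc 1 (n+1)).filter (fun x =>
    if x < p then x ∈ S else if x = p then p ≤ n ∧ p ∉ S else x - 1 ∈ S)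

def desIns (S : Finset ℕ) (p n : ℕ) : Finset ℕ :=
  (Finset.Icc 1 (n+1)).filter (fun x =>
    if x + 1 < p then x ∈ S else if x + 1 = p then False else if x = p then p ≤ n else x - 1 ∈ S)

lemma mem_EVset {l : List ℕ} {x : ℕ} :
    x ∈ EVset l ↔ 1 ≤ x ∧ x ≤ l.length ∧ Even (heightIdx l (x - 1)) := by
  simp [EVset, Finset.mem_filter, Finset.mem_Icc, and_assoc]

lemma mem_DesSet {l : List ℕ} {x : ℕ} :
    x ∈ DesSet l ↔ 1 ≤ x ∧ x ≤ l.length - 1 ∧ l.getD x 0 < l.getD (x - 1) 0 := by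
  simp [DesSet, Finset.mem_filter, Finset.mem_Icc, and_assoc]

lemma EVset_insertIdx {l : List ℕ} {m k : ℕ} (hk : k ≤ l.length) (hm : ∀ x ∈ l, x < m) :
    EVset (l.insertIdx k m) = evIns (EVset l) (k + 1) l.length := by
  have hlen : (l.insertIdx k m).length = l.length + 1 := List.length_insertIdx_of_le_length hk _
  ext x
  rw [mem_EVset, hlen, evIns, Finset.mem_filter, Finset.mem_Icc]
  constructor
  · rintro ⟨h1, h2, h3⟩
    refine ⟨⟨h1, h2⟩, ?_⟩
    rcases lt_trichotomy x (k+1) with hx | rfl | hx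
    · rw [if_pos hx]
      have hf : fIns k (x-1) = x - 1 := by simp only [fIns]; rw [if_pos (by omega)]
      rw [← hf, heightIdx_insertIdx_f hk hm l.length (x-1) (by omega) (by omega)] at h3
      exact mem_EVset.mpr ⟨h1, by omega, h3⟩
    · rw [if_neg (by omega), if_pos rfl]
      rcases Nat.lt_or_ge k l.length with hkl | hkl
      · rw [show k + 1 - 1 = k by omega, heightIdx_insertIdx_k_lt hkl hm] at h3
        refine ⟨by omega, fun hc => ?_⟩
        obtain ⟨_, _, he⟩ := mem_EVset.mp hc
        rw [show k + 1 - 1 = k by omega] at he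
        rw [Nat.even_add_one] at h3
        exact h3 he
      · have : k = l.length := by omega
        subst this
        rw [show l.length + 1 - 1 = l.length by omega, heightIdx_insertIdx_k_eq hm] at h3
        simp at h3
    · rw [if_neg (by omega), if_neg (by omega)]
      have hf : fIns k (x-2) = x - 1 := by simp only [fIns]; rw [if_neg (by omega)]; omega
      rw [← hf, heightIdx_insertIdx_f hk hm l.length (x-2) (by omega) (by omega)] at h3
      refine mem_EVset.mpr ⟨by omega, by omega, ?_⟩
      rw [show x - 1 - 1 = x - 2 by omega]
      exact h3
  · rintro ⟨⟨h1, h2⟩, h3⟩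
    refine ⟨h1, h2, ?_⟩
    rcases lt_trichotomy x (k+1) with hx | rfl | hx
    · rw [if_pos hx] at h3
      obtain ⟨_, _, he⟩ := mem_EVset.mp h3
      have hf : fIns k (x-1) = x - 1 := by simp only [fIns]; rw [if_pos (by omega)]
      rw [← hf, heightIdx_insertIdx_f hk hm l.length (x-1) (by omega) (by omega)]
      exact he
    · rw [if_neg (by omega), if_pos rfl] at h3
      obtain ⟨hkl, hns⟩ := h3
      rw [show k + 1 - 1 = k by omega, heightIdx_insertIdx_k_lt (by omega) hm]
      rw [Nat.even_add_one]
      intro he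
      exact hns (mem_EVset.mpr ⟨by omega, by omega, by rw [show k + 1 - 1 = k by omega]; exact he⟩)
    · rw [if_neg (by omega), if_neg (by omega)] at h3
      obtain ⟨_, hb, he⟩ := mem_EVset.mp h3
      have hf : fIns k (x-2) = x - 1 := by simp only [fIns]; rw [if_neg (by omega)]; omega
      rw [← hf, heightIdx_insertIdx_f hk hm l.length (x-2) (by omega) (by omega)]
      rw [show x - 1 - 1 = x - 2 by omega] at he
      exact he

lemma DesSet_insertIdx {l : List ℕ} {m k : ℕ} (hk : k ≤ l.length) (hm : ∀ x ∈ l, x < m) :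
    DesSet (l.insertIdx k m) = desIns (DesSet l) (k + 1) l.length := by
  have hlen : (l.insertIdx k m).length = l.length + 1 := List.length_insertIdx_of_le_length hk _
  ext x
  rw [mem_DesSet, hlen, desIns, Finset.mem_filter, Finset.mem_Icc]
  rw [show l.length + 1 - 1 = l.length by omega]
  constructor
  · rintro ⟨h1, h2, h3⟩
    refine ⟨⟨h1, by omega⟩, ?_⟩
    rcases lt_trichotomy x k with hx | rfl | hx
    · rw [if_pos (by omega)]
      rw [getD_insertIdx_lt hk hx, getD_insertIdx_lt hk (by omega)] at h3
      exact mem_DesSet.mpr ⟨h1, by omega, h3⟩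
    · exfalso
      rw [getD_insertIdx_k hk, getD_insertIdx_lt hk (by omega)] at h3
      have := getD_mem_lt hm (show x - 1 < l.length by omega)
      omega
    · rw [if_neg (by omega), if_neg (by omega)]
      rcases Nat.eq_or_lt_of_le (by omega : k + 1 ≤ x) with hxk | hxk
      · rw [if_pos hxk.symm]; omega
      · rw [if_neg (by omega)]
        rw [getD_insertIdx_gt hk (by omega) (by omega),
          getD_insertIdx_gt hk (by omega) (by omega)] at h3
        refine mem_DesSet.mpr ⟨by omega, by omega, ?_⟩
        rw [show x - 1 - 1 = x - 2 by omega]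
        rw [show x - 1 - 1 = x - 2 by omega] at h3
        exact h3
  · rintro ⟨⟨h1, h2⟩, h3⟩
    rcases lt_trichotomy x k with hx | rfl | hx
    · rw [if_pos (by omega)] at h3
      obtain ⟨_, hb, hd⟩ := mem_DesSet.mp h3
      refine ⟨h1, by omega, ?_⟩
      rw [getD_insertIdx_lt hk hx, getD_insertIdx_lt hk (by omega)]
      exact hd
    · rw [if_neg (by omega), if_pos (by omega)] at h3
      exact absurd h3 (by simp)
    · rw [if_neg (by omega), if_neg (by omega)] at h3
      rcases Nat.eq_or_lt_of_le (by omega : k + 1 ≤ x) with hxk | hxk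
      · rw [if_pos hxk.symm] at h3
        refine ⟨h1, by omega, ?_⟩
        rw [show x = k + 1 from hxk.symm, show k + 1 - 1 = k by omega, getD_insertIdx_k hk,
          getD_insertIdx_gt hk (by omega) (by omega), show k + 1 - 1 = k by omega]
        exact getD_mem_lt hm (by omega)
      · rw [if_neg (by omega)] at h3
        obtain ⟨_, hb, hd⟩ := mem_DesSet.mp h3
        refine ⟨h1, by omega, ?_⟩
        rw [getD_insertIdx_gt hk (by omega) (by omega),
          getD_insertIdx_gt hk (by omega) (by omega),
          show x - 1 - 1 = x - 2 by omega]
        rw [show x - 1 - 1 = x - 2 by omega] at hd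
        exact hd

/-- The slot bijection: from a `des`-insertion slot to an `ev`-insertion slot. -/
def psi (S : Finset ℕ) (n p : ℕ) : ℕ :=
  if p = n + 1 then p
  else if p - 1 ∈ S then p - 1
  else if h : ∃ j, j < n + 1 ∧ (p ≤ j ∧ j ∉ S) then Nat.find h else 0

section
variable {S : Finset ℕ} {n : ℕ} (hS : ∀ x ∈ S, 1 ≤ x ∧ x < n)
include hS

lemma slot_eq_top : evIns S (n+1) n = desIns S (n+1) n := by
  ext x
  simp only [evIns, desIns, Finset.mem_filter, Finset.mem_Icc]
  refine and_congr_right fun hb => ?_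
  rcases lt_trichotomy x n with hx | heq | hx
  · rw [if_pos (show x < n + 1 by omega), if_pos (show x + 1 < n + 1 by omega)]
  · rw [if_pos (show x < n + 1 by omega), if_neg (show ¬ x + 1 < n + 1 by omega),
      if_pos (show x + 1 = n + 1 by omega)]
    simp only [iff_false]
    exact fun hc => absurd (hS x hc).2 (by omega)
  · rw [if_neg (show ¬ x < n + 1 by omega), if_pos (show x = n + 1 by omega),
      if_neg (show ¬ x + 1 < n + 1 by omega), if_neg (show ¬ x + 1 = n + 1 by omega),
      if_pos (show x = n + 1 by omega)]
    simp

omit hS in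
lemma slot_eq_mempred {p : ℕ} (hp2 : 2 ≤ p) (hpn : p ≤ n) (hmem : p - 1 ∈ S) :
    evIns S (p-1) n = desIns S p n := by
  ext x
  simp only [evIns, desIns, Finset.mem_filter, Finset.mem_Icc]
  refine and_congr_right fun hb => ?_
  rcases lt_trichotomy x (p-1) with hx | heq | hx
  · rw [if_pos (show x < p - 1 from hx), if_pos (show x + 1 < p by omega)]
  · rw [if_neg (show ¬ x < p - 1 by omega), if_pos (show x = p - 1 by omega),
      if_neg (show ¬ x + 1 < p by omega), if_pos (show x + 1 = p by omega)]
    simp only [iff_false, not_and]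
    exact fun _ hc => hc hmem
  · rcases lt_trichotomy x p with hx2 | heq2 | hx2
    · omega
    · rw [if_neg (show ¬ x < p - 1 by omega), if_neg (show ¬ x = p - 1 by omega),
        if_neg (show ¬ x + 1 < p by omega), if_neg (show ¬ x + 1 = p by omega),
        if_pos (show x = p by omega)]
      have : x - 1 ∈ S := by rw [show x - 1 = p - 1 by omega]; exact hmem
      simp only [this, true_iff]
      exact hpn
    · rw [if_neg (show ¬ x < p - 1 by omega), if_neg (show ¬ x = p - 1 by omega),
        if_neg (show ¬ x + 1 < p by omega), if_neg (show ¬ x + 1 = p by omega),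
        if_neg (show ¬ x = p by omega)]

omit hS in
lemma slot_eq_run {p q : ℕ} (hp1 : 1 ≤ p) (hpn : p ≤ n) (hnm : p - 1 ∉ S)
    (hq1 : p ≤ q) (hq2 : q ≤ n) (hqn : q ∉ S) (hrun : ∀ j, p ≤ j → j < q → j ∈ S) :
    evIns S q n = desIns S p n := by
  ext x
  simp only [evIns, desIns, Finset.mem_filter, Finset.mem_Icc]
  refine and_congr_right fun hb => ?_
  rcases lt_trichotomy x p with hx | heq | hx
  · rcases lt_trichotomy x (p-1) with hx2 | heq2 | hx2
    · rw [if_pos (show x < q by omega), if_pos (show x + 1 < p by omega)]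
    · rw [if_pos (show x < q by omega), if_neg (show ¬ x + 1 < p by omega),
        if_pos (show x + 1 = p by omega)]
      have : x ∉ S := by rw [heq2]; exact hnm
      simp [this]
    · omega
  · rw [if_neg (show ¬ x + 1 < p by omega), if_neg (show ¬ x + 1 = p by omega),
      if_pos (show x = p by omega)]
    simp only [show (p ≤ n) = True from eq_true hpn, iff_true]
    rcases Nat.eq_or_lt_of_le hq1 with heq2 | hlt
    · rw [if_neg (show ¬ x < q by omega), if_pos (show x = q by omega)]
      exact ⟨hq2, hqn⟩
    · rw [if_pos (show x < q by omega)]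
      rw [heq]
      exact hrun p le_rfl hlt
  · rcases lt_trichotomy x q with hx2 | heq2 | hx2
    · rw [if_pos (show x < q by omega), if_neg (show ¬ x + 1 < p by omega),
        if_neg (show ¬ x + 1 = p by omega), if_neg (show ¬ x = p by omega)]
      simp only [eq_true (hrun _ (by omega) (by omega) : x - 1 ∈ S),
        eq_true (hrun _ (by omega) hx2 : x ∈ S)]
    · rw [if_neg (show ¬ x < q by omega), if_pos (show x = q by omega),
        if_neg (show ¬ x + 1 < p by omega), if_neg (show ¬ x + 1 = p by omega),
        if_neg (show ¬ x = p by omega)]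
      simp only [eq_true (hrun _ (by omega) (by omega) : x - 1 ∈ S), iff_true]
      exact ⟨hq2, hqn⟩
    · rw [if_neg (show ¬ x < q by omega), if_neg (show ¬ x = q by omega),
        if_neg (show ¬ x + 1 < p by omega), if_neg (show ¬ x + 1 = p by omega),
        if_neg (show ¬ x = p by omega)]

lemma psi_branches {p : ℕ} (hp1 : 1 ≤ p) (hpn : p ≤ n + 1) :
    (p = n + 1 ∧ psi S n p = n + 1) ∨
    (p ≤ n ∧ 2 ≤ p ∧ p - 1 ∈ S ∧ psi S n p = p - 1) ∨
    (p ≤ n ∧ p - 1 ∉ S ∧ p ≤ psi S n p ∧ psi S n p ∉ S ∧ psi S n p ≤ n ∧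
      ∀ j, p ≤ j → j < psi S n p → j ∈ S) := by
  have h0 : (0 : ℕ) ∉ S := fun hc => by have := hS 0 hc; omega
  have hn : n ∉ S := fun hc => by have := hS n hc; omega
  rw [psi]
  by_cases htop : p = n + 1
  · left; rw [if_pos htop]; exact ⟨htop, htop⟩
  · right
    rw [if_neg htop]
    by_cases hmem : p - 1 ∈ S
    · left
      rw [if_pos hmem]
      have h2 : 2 ≤ p := by
        by_contra hc
        have : p - 1 = 0 := by omega
        rw [this] at hmem; exact h0 hmem
      exact ⟨by omega, h2, hmem, rfl⟩
    · right
      rw [if_neg hmem]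
      have hex : ∃ j, j < n + 1 ∧ (p ≤ j ∧ j ∉ S) := ⟨n, by omega, by omega, hn⟩
      rw [dif_pos hex]
      obtain ⟨hqb, hq1, hqn⟩ := Nat.find_spec hex
      refine ⟨by omega, hmem, hq1, hqn, by omega, fun j hj1 hj2 => ?_⟩
      by_contra hc
      have := Nat.find_min hex hj2
      push_neg at this
      exact hc (this (by omega) hj1)

lemma psi_eq_desIns {p : ℕ} (hp1 : 1 ≤ p) (hpn : p ≤ n + 1) :
    evIns S (psi S n p) n = desIns S p n := by
  rcases psi_branches hS hp1 hpn with ⟨ha, hb⟩ | ⟨ha, h2, hb, hc⟩ | ⟨ha, hb, hc, hd, he, hf⟩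
  · rw [hb, ha]; exact slot_eq_top hS
  · rw [hc]; exact slot_eq_mempred h2 ha hb
  · exact slot_eq_run hp1 ha hb hc he hd hf

lemma psi_mem {p : ℕ} (hp1 : 1 ≤ p) (hpn : p ≤ n + 1) :
    1 ≤ psi S n p ∧ psi S n p ≤ n + 1 := by
  rcases psi_branches hS hp1 hpn with ⟨ha, hb⟩ | ⟨ha, h2, hb, hc⟩ | ⟨ha, hb, hc, hd, he, hf⟩
  · omega
  · omega
  · omega

lemma psi_inj {p₁ p₂ : ℕ} (h1 : 1 ≤ p₁) (h1' : p₁ ≤ n + 1) (h2 : 1 ≤ p₂) (h2' : p₂ ≤ n + 1)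
    (heq : psi S n p₁ = psi S n p₂) : p₁ = p₂ := by
  rcases psi_branches hS h1 h1' with ⟨ha, hb⟩ | ⟨ha, ha2, hb, hc⟩ | ⟨ha, hb, hc, hd, he, hf⟩ <;>
    rcases psi_branches hS h2 h2' with ⟨ha', hb'⟩ | ⟨ha', ha2', hb', hc'⟩ |
      ⟨ha', hb', hc', hd', he', hf'⟩
  · omega
  · omega
  · omega
  · omega
  · omega
  · -- p₁ mem-branch, p₂ run-branch
    exfalso
    rw [hc] at heq
    rw [← heq] at hd'
    exact hd' hb
  · omega
  · exfalso
    rw [hc'] at heq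
    rw [heq] at hd
    exact hd hb'
  · rcases lt_trichotomy p₁ p₂ with hlt | heq'' | hlt
    · exact absurd (hf _ (by omega) (by omega)) hb'
    · exact heq''
    · exact absurd (hf' _ (by omega) (by omega)) hb

lemma psi_surj {q : ℕ} (hq1 : 1 ≤ q) (hqn : q ≤ n + 1) :
    ∃ p, 1 ≤ p ∧ p ≤ n + 1 ∧ psi S n p = q := by
  have h0 : (0 : ℕ) ∉ S := fun hc => by have := hS 0 hc; omega
  have hn : n ∉ S := fun hc => by have := hS n hc; omega
  by_cases htop : q = n + 1
  · exact ⟨n+1, by omega, le_rfl, by rw [psi, if_pos rfl]; omega⟩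
  · by_cases hmem : q ∈ S
    · refine ⟨q + 1, by omega, by have := hS _ hmem; omega, ?_⟩
      rw [psi, if_neg (by have := hS _ hmem; omega), show q + 1 - 1 = q by omega, if_pos hmem]
    · -- q ∉ S, q ≤ n : take p largest ≤ q with p - 1 ∉ S
      have hq2 : q ≤ n := by
        rcases Nat.eq_or_lt_of_le hqn with h | h
        · exact absurd h htop
        · omega
      have hexd : ∃ p, 1 ≤ p ∧ p ≤ q ∧ p - 1 ∉ S ∧ ∀ j, p ≤ j → j < q → j ∈ S := by
        have aux : ∀ c d, q - d ≤ c → d < q → (∀ j, q - d ≤ j → j < q → j ∈ S) →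
            ∃ p, 1 ≤ p ∧ p ≤ q ∧ p - 1 ∉ S ∧ ∀ j, p ≤ j → j < q → j ∈ S := by
          intro c
          induction c with
          | zero => intro d h1 h2 _; omega
          | succ c ih =>
            intro d hdc hdq hP
            by_cases hmem2 : (q - d) - 1 ∈ S
            · by_cases hd1 : d + 1 < q
              · refine ih (d+1) (by omega) hd1 (fun j hj1 hj2 => ?_)
                rcases Nat.eq_or_lt_of_le hj1 with hje | hjl
                · rw [← hje, show q - (d+1) = q - d - 1 by omega]
                  exact hmem2
                · exact hP j (by omega) hj2
              · have hdq1 : d + 1 = q := by omega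
                have : q - d - 1 = 0 := by omega
                rw [this] at hmem2
                exact absurd hmem2 h0
            · exact ⟨q - d, by omega, by omega, hmem2, fun j hj1 hj2 => hP j hj1 hj2⟩
        exact aux q 0 (by omega) (by omega) (fun j h1 h2 => by omega)
      obtain ⟨p, hp1, hpq, hpm, hrun⟩ := hexd
      refine ⟨p, hp1, by omega, ?_⟩
      rw [psi, if_neg (by omega), if_neg hpm]
      have hex : ∃ j, j < n + 1 ∧ (p ≤ j ∧ j ∉ S) := ⟨q, by omega, by omega, hmem⟩
      rw [dif_pos hex]
      -- Nat.find hex = q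
      obtain ⟨hfb, hf1, hfn⟩ := Nat.find_spec hex
      have hle : Nat.find hex ≤ q := Nat.find_min' hex ⟨by omega, by omega, hmem⟩
      rcases Nat.eq_or_lt_of_le hle with h | h
  
      · exact h
      · exact absurd (hrun _ hf1 h) hfn

end
/-! ### Part 4: permutations machinery and the main multiset identity -/

def P (n : ℕ) : List (List ℕ) := (List.range' 1 n).reverse.permutations'

lemma perms_perm_P (n : ℕ) : List.Perm (perms n) (P n) :=
  (List.permutations_perm_permutations' _).trans
    (((List.range' 1 n).reverse_perm).symm.permutations')

lemma P_succ (n : ℕ) : P (n+1) = (P n).flatMap (List.permutations'Aux (n+1)) := by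
  have h : (List.range' 1 (n+1)).reverse = (n+1) :: (List.range' 1 n).reverse := by
    rw [List.range'_1_concat, List.reverse_append]
    simp [Nat.add_comm]
  rw [P, h]
  rfl

lemma coe_flatMap (l : List (List ℕ)) (f : List ℕ → List (List ℕ)) :
    (↑(l.flatMap f) : Multiset (List ℕ)) = Multiset.bind ↑l (fun a => ↑(f a)) :=
  (Multiset.coe_bind l f).symm

lemma permutations'Aux_eq (x : ℕ) (s : List ℕ) :
    List.permutations'Aux x s = (List.range (s.length+1)).map (fun k => s.insertIdx k x) := by
  apply List.ext_getElem
  · simp [List.length_permutations'Aux]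
  · intro i h1 h2
    simp [List.getElem_permutations'Aux]

lemma mem_P_perm {n : ℕ} {l : List ℕ} (h : l ∈ P n) : List.Perm l (List.range' 1 n) :=
  (List.mem_permutations'.mp h).trans (List.reverse_perm _)

lemma mem_P_length {n : ℕ} {l : List ℕ} (h : l ∈ P n) : l.length = n := by
  simpa using (mem_P_perm h).length_eq

lemma mem_P_lt {n : ℕ} {l : List ℕ} (h : l ∈ P n) : ∀ x ∈ l, x < n + 1 := by
  intro x hx
  have := (mem_P_perm h).mem_iff.mp hx
  rw [List.mem_range'_1] at this
  omega

lemma DesSet_bound {n : ℕ} {l : List ℕ} (h : l.length = n) :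
    ∀ x ∈ DesSet l, 1 ≤ x ∧ x < n := by
  intro x hx
  obtain ⟨h1, h2, _⟩ := mem_DesSet.mp hx
  omega

lemma EVset_bound {n : ℕ} {l : List ℕ} (h : l.length = n) :
    ∀ x ∈ EVset l, 1 ≤ x ∧ x < n := by
  intro x hx
  obtain ⟨h1, h2, h3⟩ := mem_EVset.mp hx
  refine ⟨h1, ?_⟩
  rcases Nat.eq_or_lt_of_le h2 with heq | hlt
  · exfalso
    have hp : parentIdx l (x - 1) = none := parentIdx_eq_none (fun j hj1 hj2 => by omega)
    rw [heightIdx_of_none hp] at h3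
    simp [Nat.even_iff] at h3
  · omega

/-- slot multiset equality -/
lemma slot_multiset {S : Finset ℕ} {n : ℕ} (hS : ∀ x ∈ S, 1 ≤ x ∧ x < n) :
    Multiset.map (fun k => evIns S (k+1) n) (↑(List.range (n+1)) : Multiset ℕ) =
      Multiset.map (fun k => desIns S (k+1) n) (↑(List.range (n+1)) : Multiset ℕ) := by
  symm
  apply Multiset.map_eq_map_of_bij_of_nodup _ _
    (by exact (List.nodup_range)) (by exact (List.nodup_range))
    (fun k _ => psi S n (k+1) - 1)
  · intro a ha
    have hb := psi_mem hS (p := a + 1) (by omega) (by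
      have : a < n + 1 := by simpa [List.mem_range] using ha
      omega)
    simp only [Multiset.mem_coe, List.mem_range] at *
    omega
  · intro a₁ ha₁ a₂ ha₂ heq
    have m1 : a₁ < n + 1 := by simpa [List.mem_range] using ha₁
    have m2 : a₂ < n + 1 := by simpa [List.mem_range] using ha₂
    have b1 := psi_mem hS (p := a₁ + 1) (by omega) (by omega)
    have b2 := psi_mem hS (p := a₂ + 1) (by omega) (by omega)
    have : psi S n (a₁+1) = psi S n (a₂+1) := by omega
    have := psi_inj hS (p₁ := a₁+1) (p₂ := a₂+1) (by omega) (by omega) (by omega) (by omega) this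
    omega
  · intro b hb
    have hbm : b < n + 1 := by simpa [List.mem_range] using hb
    obtain ⟨p, hp1, hp2, hp3⟩ := psi_surj hS (q := b + 1) (by omega) (by omega)
    refine ⟨p - 1, ?_, ?_⟩
    · simp only [Multiset.mem_coe, List.mem_range]; omega
    · rw [show p - 1 + 1 = p by omega, hp3]
      omega
  · intro a ha
    have m1 : a < n + 1 := by simpa [List.mem_range] using ha
    have b1 := psi_mem hS (p := a + 1) (by omega) (by omega)
    rw [show psi S n (a+1) - 1 + 1 = psi S n (a+1) by omega]
    exact (psi_eq_desIns hS (by omega) (by omega)).symm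

lemma EVset_nil : EVset [] = ∅ := by
  rw [EVset]
  simp

lemma DesSet_nil : DesSet [] = ∅ := by
  rw [DesSet]
  simp

theorem main_multiset (n : ℕ) :
    Multiset.map EVset (↑(P n) : Multiset (List ℕ)) =
      Multiset.map DesSet (↑(P n) : Multiset (List ℕ)) := by
  induction n with
  | zero =>
    show Multiset.map EVset (↑(P 0) : Multiset (List ℕ)) = _
    have : P 0 = [[]] := rfl
    rw [this]
    simp [EVset_nil, DesSet_nil]
  | succ n ih =>
    -- expand both sides to binds
    rw [P_succ, coe_flatMap, Multiset.map_bind, Multiset.map_bind]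
    have hev : ∀ σ ∈ (↑(P n) : Multiset (List ℕ)),
        Multiset.map EVset (↑(List.permutations'Aux (n+1) σ) : Multiset (List ℕ)) =
          Multiset.map (fun k => evIns (EVset σ) (k+1) n) (↑(List.range (n+1)) : Multiset ℕ) := by
      intro σ hσ
      rw [Multiset.mem_coe] at hσ
      have hlen := mem_P_length hσ
      have hlt := mem_P_lt hσ
      rw [permutations'Aux_eq, hlen, ← Multiset.map_coe, Multiset.map_map]
      apply Multiset.map_congr rfl
      intro k hk
      have hk' : k ≤ σ.length := by
        rw [Multiset.mem_coe, List.mem_range] at hk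
        omega
      simp only [Function.comp_apply]
      rw [EVset_insertIdx hk' hlt, hlen]
    have hdes : ∀ σ ∈ (↑(P n) : Multiset (List ℕ)),
        Multiset.map DesSet (↑(List.permutations'Aux (n+1) σ) : Multiset (List ℕ)) =
          Multiset.map (fun k => desIns (DesSet σ) (k+1) n) (↑(List.range (n+1)) : Multiset ℕ) := by
      intro σ hσ
      rw [Multiset.mem_coe] at hσ
      have hlen := mem_P_length hσ
      have hlt := mem_P_lt hσ
      rw [permutations'Aux_eq, hlen, ← Multiset.map_coe, Multiset.map_map]
      apply Multiset.map_congr rfl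
      intro k hk
      have hk' : k ≤ σ.length := by
        rw [Multiset.mem_coe, List.mem_range] at hk
        omega
      simp only [Function.comp_apply]
      rw [DesSet_insertIdx hk' hlt, hlen]
    rw [Multiset.bind_congr hev, Multiset.bind_congr hdes]
    have step1 : (Multiset.bind (↑(P n) : Multiset (List ℕ))
        (fun σ => Multiset.map (fun k => evIns (EVset σ) (k+1) n) (↑(List.range (n+1)) : Multiset ℕ))) =
        Multiset.bind (↑(P n) : Multiset (List ℕ))
        (fun σ => Multiset.map (fun k => desIns (EVset σ) (k+1) n) (↑(List.range (n+1)) : Multiset ℕ)) := by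
      apply Multiset.bind_congr
      intro σ hσ
      rw [Multiset.mem_coe] at hσ
      exact slot_multiset (EVset_bound (mem_P_length hσ))
    rw [step1]
    have e1 : (Multiset.bind (↑(P n) : Multiset (List ℕ))
        (fun σ => Multiset.map (fun k => desIns (EVset σ) (k+1) n) (↑(List.range (n+1)) : Multiset ℕ))) =
        Multiset.bind (Multiset.map EVset (↑(P n) : Multiset (List ℕ)))
        (fun S => Multiset.map (fun k => desIns S (k+1) n) (↑(List.range (n+1)) : Multiset ℕ)) := by
      rw [Multiset.bind_map]
    have e2 : (Multiset.bind (↑(P n) : Multiset (List ℕ))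
        (fun σ => Multiset.map (fun k => desIns (DesSet σ) (k+1) n) (↑(List.range (n+1)) : Multiset ℕ))) =
        Multiset.bind (Multiset.map DesSet (↑(P n) : Multiset (List ℕ)))
        (fun S => Multiset.map (fun k => desIns S (k+1) n) (↑(List.range (n+1)) : Multiset ℕ)) := by
      rw [Multiset.bind_map]
    rw [e1, e2, ih]

theorem perms_multiset_eq (n : ℕ) :
    Multiset.map EVset (↑(perms n) : Multiset (List ℕ)) =
      Multiset.map DesSet (↑(perms n) : Multiset (List ℕ)) := by
  have : (↑(perms n) : Multiset (List ℕ)) = ↑(P n) := Multiset.coe_eq_coe.mpr (perms_perm_P n)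
  rw [this, main_multiset]


/-! ### Part 5: the theorem -/

lemma count_filter_length (f : List ℕ → Finset ℕ) (S : Finset ℕ) (L : List (List ℕ)) :
    Multiset.count S (Multiset.map f (↑L : Multiset (List ℕ))) =
      (L.filter (fun m => decide (S = f m))).length := by
  rw [Multiset.count_map]
  have : Multiset.filter (fun a => S = f a) (↑L : Multiset (List ℕ)) =
      ↑(L.filter (fun m => decide (S = f m))) := by
    simp [Multiset.filter_coe]
  rw [this, Multiset.coe_card]

lemma nodup_perms (n : ℕ) : (perms n).Nodup :=
  List.nodup_permutations _ (List.nodup_range')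

lemma filter_length_eq (n : ℕ) (S : Finset ℕ) :
    ((perms n).filter (fun m => decide (S = EVset m))).length =
      ((perms n).filter (fun m => decide (S = DesSet m))).length := by
  rw [← count_filter_length, ← count_filter_length, perms_multiset_eq]


/-- the bistatistic `(veh', SIVEH)` is Euler–Mahonian on `S_n`:
it is jointly equidistributed with `(des, MAJ)`; equivalently there is a bijection
`Θ : S_n → S_n` with `EV(Θ(π)) = Des(π)` for all `π`. -/
theorem veh_siveh_euler_mahonian (n : ℕ) :
    ((perms n).map (fun l =>
        (MvPolynomial.X 0 : MvPolynomial (Fin 2) ℚ) ^ (EVset l).card *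
          MvPolynomial.X 1 ^ (∑ i ∈ EVset l, i))).sum =
      ((perms n).map (fun l =>
        (MvPolynomial.X 0 : MvPolynomial (Fin 2) ℚ) ^ (DesSet l).card *
          MvPolynomial.X 1 ^ (∑ i ∈ DesSet l, i))).sum ∧
    ∃ F : List ℕ → List ℕ,
      (∀ l ∈ perms n, F l ∈ perms n) ∧
      (∀ l ∈ perms n, ∀ l' ∈ perms n, F l = F l' → l = l') ∧
      (∀ m ∈ perms n, ∃ l ∈ perms n, F l = m) ∧
      (∀ l ∈ perms n, EVset (F l) = DesSet l) := by
  constructor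
  · -- polynomial identity from the multiset identity
    set h : Finset ℕ → MvPolynomial (Fin 2) ℚ :=
      fun S => (MvPolynomial.X 0 : MvPolynomial (Fin 2) ℚ) ^ S.card *
        MvPolynomial.X 1 ^ (∑ i ∈ S, i) with hh
    have key : ∀ L : List (List ℕ), ∀ g : List ℕ → Finset ℕ,
        (L.map (fun l => h (g l))).sum = (Multiset.map h (Multiset.map g (↑L : Multiset (List ℕ)))).sum := by
      intro L g
      rw [Multiset.map_map]
      rw [← Multiset.sum_coe]
      rfl
    rw [show (fun l => (MvPolynomial.X 0 : MvPolynomial (Fin 2) ℚ) ^ (EVset l).card *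
          MvPolynomial.X 1 ^ (∑ i ∈ EVset l, i)) = fun l => h (EVset l) from rfl]
    rw [show (fun l => (MvPolynomial.X 0 : MvPolynomial (Fin 2) ℚ) ^ (DesSet l).card *
          MvPolynomial.X 1 ^ (∑ i ∈ DesSet l, i)) = fun l => h (DesSet l) from rfl]
    rw [key _ EVset, key _ DesSet, perms_multiset_eq]
  · classical
    set F : List ℕ → List ℕ := fun l =>
      ((perms n).filter (fun m => decide (DesSet l = EVset m))).getD
        (@List.idxOf (List ℕ) instBEqOfDecidableEq l
          ((perms n).filter (fun m => decide (DesSet l = DesSet m)))) [] with hF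
    have hmemD : ∀ l ∈ perms n,
        l ∈ (perms n).filter (fun m => decide (DesSet l = DesSet m)) := by
      intro l hl
      exact List.mem_filter.mpr ⟨hl, by simp⟩
    have hidxD : ∀ l ∈ perms n,
        @List.idxOf (List ℕ) instBEqOfDecidableEq l
            ((perms n).filter (fun m => decide (DesSet l = DesSet m))) <
          ((perms n).filter (fun m => decide (DesSet l = EVset m))).length := by
      intro l hl
      rw [filter_length_eq n (DesSet l)]
      exact (@List.idxOf_lt_length_iff _ instBEqOfDecidableEq _ _ _).mpr (hmemD l hl)
    have main : ∀ l ∈ perms n, F l ∈ perms n ∧ EVset (F l) = DesSet l := by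
      intro l hl
      have hFl : F l ∈ (perms n).filter (fun m => decide (DesSet l = EVset m)) := by
        rw [hF]
        simp only
        rw [List.getD_eq_getElem _ _ (hidxD l hl)]
        exact List.getElem_mem _
      obtain ⟨h1, h2⟩ := List.mem_filter.mp hFl
      exact ⟨h1, (of_decide_eq_true h2).symm⟩
    have inj : ∀ l ∈ perms n, ∀ l' ∈ perms n, F l = F l' → l = l' := by
      intro l hl l' hl' heq
      have hS : DesSet l = DesSet l' := by
        rw [← (main l hl).2, ← (main l' hl').2, heq]
      rw [hF] at heq
      simp only at heq
      rw [← hS] at heq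
      have hidx1 := hidxD l hl
      have hidx2 : @List.idxOf (List ℕ) instBEqOfDecidableEq l'
            ((perms n).filter (fun m => decide (DesSet l = DesSet m))) <
          ((perms n).filter (fun m => decide (DesSet l = EVset m))).length := by
        rw [filter_length_eq n (DesSet l)]
        apply (@List.idxOf_lt_length_iff _ instBEqOfDecidableEq _ _ _).mpr
        exact List.mem_filter.mpr ⟨hl', by simp [hS]⟩
      rw [List.getD_eq_getElem _ _ hidx1, List.getD_eq_getElem _ _ hidx2] at heq
      have hnd : ((perms n).filter (fun m => decide (DesSet l = EVset m))).Nodup :=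
        (nodup_perms n).filter _
      have hidxeq := (hnd.getElem_inj_iff).mp heq
      have e1 : ((perms n).filter (fun m => decide (DesSet l = DesSet m)))[
          @List.idxOf (List ℕ) instBEqOfDecidableEq l
            ((perms n).filter (fun m => decide (DesSet l = DesSet m)))]'(
            (@List.idxOf_lt_length_iff _ instBEqOfDecidableEq _ _ _).mpr (hmemD l hl)) = l :=
        @List.getElem_idxOf _ instBEqOfDecidableEq _ _ _ _
      have e2 : ((perms n).filter (fun m => decide (DesSet l = DesSet m)))[
          @List.idxOf (List ℕ) instBEqOfDecidableEq l'
            ((perms n).filter (fun m => decide (DesSet l = DesSet m)))]'(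
            (@List.idxOf_lt_length_iff _ instBEqOfDecidableEq _ _ _).mpr (List.mem_filter.mpr ⟨hl', by simp [hS]⟩)) = l' :=
        @List.getElem_idxOf _ instBEqOfDecidableEq _ _ _ _
      rw [← e1, ← e2]
      congr 1
    refine ⟨F, fun l hl => (main l hl).1, inj, ?_, fun l hl => (main l hl).2⟩
    -- surjectivity
    have hmapnd : ((perms n).map F).Nodup :=
      (nodup_perms n).map_on (fun x hx y hy h => inj x hx y hy h)
    have hsub : (perms n).map F ⊆ perms n := by
      intro x hx
      obtain ⟨l, hl, rfl⟩ := List.mem_map.mp hx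
      exact (main l hl).1
    have hperm : List.Perm ((perms n).map F) (perms n) :=
      (List.subperm_of_subset hmapnd hsub).perm_of_length_le (by rw [List.length_map])
    intro m hm
    have : m ∈ (perms n).map F := hperm.mem_iff.mpr hm
    obtain ⟨l, hl, hFl⟩ := List.mem_map.mp this
    exact ⟨l, hl, hFl⟩

end FS
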